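/- Constant domain completeness of QRC₁: if φ and ψ are formulas in a signature Σ and the sequent φ ⊢ ψ is not derivable in QRC₁, then there exist an adequate, finite, irreflexive relational model M in which every world has the same domain (constant domain), a world w of M, and a w-assignment g such that M, w ⊩^g φ and M, w ⊮^g ψ. -/

import Mathlib

namespace QRC1

/-- Strictly positive formulas of QRC₁ over a signature with constants `Cst`,
relation symbols `Rl`, and arity function `ar`.  Terms are either variables
(natural numbers, left) or constants (right). -/
inductive Fml (Cst Rl : Type) (ar : Rl → ℕ) : Type
  | top : Fml Cst Rl ar
  | rel (S : Rl) (ts : Fin (ar S) → ℕ ⊕ Cst) : Fml Cst Rl ar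
  | and (φ ψ : Fml Cst Rl ar) : Fml Cst Rl ar
  | dia (φ : Fml Cst Rl ar) : Fml Cst Rl ar
  | all (x : ℕ) (φ : Fml Cst Rl ar) : Fml Cst Rl ar

namespace Fml

variable {Cst Rl : Type} {ar : Rl → ℕ}

/-- Free variables of a formula. -/
def fv : Fml Cst Rl ar → Set ℕ
  | .top => ∅
  | .rel _ ts => {x | ∃ i, ts i = Sum.inl x}
  | .and φ ψ => fv φ ∪ fv ψ
  | .dia φ => fv φ
  | .all y φ => fv φ \ {y}

/-- A formula is closed when it has no free variables. -/
def Closed (φ : Fml Cst Rl ar) : Prop := φ.fv = ∅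

/-- Constants occurring in a formula. -/
def consts : Fml Cst Rl ar → Set Cst
  | .top => ∅
  | .rel _ ts => {c | ∃ i, ts i = Sum.inr c}
  | .and φ ψ => consts φ ∪ consts ψ
  | .dia φ => consts φ
  | .all _ φ => consts φ

/-- Substitution of a term for a variable, on terms. -/
def substT (x : ℕ) (t : ℕ ⊕ Cst) : ℕ ⊕ Cst → ℕ ⊕ Cst
  | .inl y => if y = x then t else .inl y
  | .inr c => .inr c

/-- `φ.subst x t` replaces all free occurrences of variable `x` in `φ` by the term `t`. -/
def subst : Fml Cst Rl ar → ℕ → (ℕ ⊕ Cst) → Fml Cst Rl ar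
  | .top, _, _ => .top
  | .rel S ts, x, t => .rel S (fun i => substT x t (ts i))
  | .and φ ψ, x, t => .and (φ.subst x t) (ψ.subst x t)
  | .dia φ, x, t => .dia (φ.subst x t)
  | .all y φ, x, t => if y = x then .all y φ else .all y (φ.subst x t)

/-- `FreeFor t x φ`: the term `t` is free for the variable `x` in `φ`, i.e. no
free occurrence of a variable of `t` becomes bound in `φ[x/t]`. -/
def FreeFor (t : ℕ ⊕ Cst) (x : ℕ) : Fml Cst Rl ar → Prop
  | .top => True
  | .rel _ _ => True
  | .and φ ψ => FreeFor t x φ ∧ FreeFor t x ψ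
  | .dia φ => FreeFor t x φ
  | .all y φ => x ∉ fv (Fml.all y φ) ∨ (t ≠ .inl y ∧ FreeFor t x φ)

/-- Modal depth. -/
def mdepth : Fml Cst Rl ar → ℕ
  | .top => 0
  | .rel _ _ => 0
  | .and φ ψ => max φ.mdepth ψ.mdepth
  | .dia φ => φ.mdepth + 1
  | .all _ φ => φ.mdepth

/-- Quantifier depth. -/
def udepth : Fml Cst Rl ar → ℕ
  | .top => 0
  | .rel _ _ => 0
  | .and φ ψ => max φ.udepth ψ.udepth
  | .dia φ => φ.udepth
  | .all _ φ => φ.udepth + 1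

/-- Number of distinct constants occurring in a formula. -/
noncomputable def cdepth (φ : Fml Cst Rl ar) : ℕ := φ.consts.ncard

/-- Size of a formula (for termination purposes). -/
def size : Fml Cst Rl ar → ℕ
  | .top => 1
  | .rel _ _ => 1
  | .and φ ψ => φ.size + ψ.size + 1
  | .dia φ => φ.size + 1
  | .all _ φ => φ.size + 1

theorem size_subst (φ : Fml Cst Rl ar) (x : ℕ) (t : ℕ ⊕ Cst) :
    (φ.subst x t).size = φ.size := by
  induction φ generalizing x t with
  | top => rfl
  | rel S ts => rfl
  | and φ ψ ihφ ihψ => simp [subst, size, ihφ, ihψ]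
  | dia φ ih => simp [subst, size, ih]
  | all y φ ih => by_cases h : y = x <;> simp [subst, h, size, ih]

/-- The closure of a formula under a set of constants `C`, where the
subformulas of `∀x φ` are all `φ[x/c]` for `c ∈ C`. -/
def cl (C : Set Cst) : Fml Cst Rl ar → Set (Fml Cst Rl ar)
  | .top => {.top}
  | .rel S ts => {.rel S ts, .top}
  | .and φ ψ => {.and φ ψ} ∪ φ.cl C ∪ ψ.cl C
  | .dia φ => {.dia φ} ∪ φ.cl C
  | .all x φ => {.all x φ} ∪ ⋃ c ∈ C, (φ.subst x (.inr c)).cl C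
termination_by φ => φ.size
decreasing_by all_goals (simp [size, size_subst]; try omega)

/-- Renaming of constants along a map `f` (used for signature extensions). -/
def mapC {Cst' : Type} (f : Cst → Cst') : Fml Cst Rl ar → Fml Cst' Rl ar
  | .top => .top
  | .rel S ts => .rel S (fun i => Sum.map id f (ts i))
  | .and φ ψ => .and (φ.mapC f) (ψ.mapC f)
  | .dia φ => .dia (φ.mapC f)
  | .all x φ => .all x (φ.mapC f)

/-- Simultaneous substitution of terms for variables. -/
def msubst (σ : ℕ → ℕ ⊕ Cst) : Fml Cst Rl ar → Fml Cst Rl ar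
  | .top => .top
  | .rel S ts => .rel S (fun i => match ts i with
      | .inl x => σ x
      | .inr c => .inr c)
  | .and φ ψ => .and (φ.msubst σ) (ψ.msubst σ)
  | .dia φ => .dia (φ.msubst σ)
  | .all x φ => .all x (φ.msubst (Function.update σ x (.inl x)))

/-- `φ^g`: replace every free variable `x` of `φ` by the constant `g x`. -/
def capp (g : ℕ → Cst) (φ : Fml Cst Rl ar) : Fml Cst Rl ar :=
  φ.msubst (fun x => .inr (g x))

end Fml

/-- The derivability relation `φ ⊢ ψ` of the calculus QRC₁. -/
inductive Der {Cst Rl : Type} {ar : Rl → ℕ} : Fml Cst Rl ar → Fml Cst Rl ar → Prop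
  | top (φ) : Der φ .top
  | refl (φ) : Der φ φ
  | andE1 (φ ψ) : Der (.and φ ψ) φ
  | andE2 (φ ψ) : Der (.and φ ψ) ψ
  | andI {φ ψ χ} : Der φ ψ → Der φ χ → Der φ (.and ψ χ)
  | cut {φ ψ χ} : Der φ ψ → Der ψ χ → Der φ χ
  | diaMono {φ ψ} : Der φ ψ → Der (.dia φ) (.dia ψ)
  | diaTrans (φ) : Der (.dia (.dia φ)) (.dia φ)
  | allI {φ ψ} (x) : Der φ ψ → x ∉ φ.fv → Der φ (.all x ψ)
  | allE {φ ψ} (x) (t : ℕ ⊕ Cst) : Der (φ.subst x t) ψ → Fml.FreeFor t x φ →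
      Der (.all x φ) ψ
  | inst {φ ψ} (x) (t : ℕ ⊕ Cst) : Der φ ψ → Fml.FreeFor t x φ → Fml.FreeFor t x ψ →
      Der (φ.subst x t) (ψ.subst x t)
  | genC {φ ψ} (x) (c : Cst) : Der (φ.subst x (.inr c)) (ψ.subst x (.inr c)) →
      c ∉ φ.consts → c ∉ ψ.consts → Der φ ψ

section Depths

variable {Cst Rl : Type} {ar : Rl → ℕ}

/-- Modal depth of a set of formulas (the supremum of the modal depths). -/
noncomputable def mdepthSet (Γ : Set (Fml Cst Rl ar)) : ℕ := sSup (Fml.mdepth '' Γ)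

/-- Quantifier depth of a set of formulas. -/
noncomputable def udepthSet (Γ : Set (Fml Cst Rl ar)) : ℕ := sSup (Fml.udepth '' Γ)

/-- Maximum number of distinct constants per formula in a set of formulas. -/
noncomputable def cdepthSet (Γ : Set (Fml Cst Rl ar)) : ℕ := sSup (Fml.cdepth '' Γ)

/-- Closure of a set of formulas under a set of constants. -/
def clSet (C : Set Cst) (Γ : Set (Fml Cst Rl ar)) : Set (Fml Cst Rl ar) :=
  ⋃ γ ∈ Γ, γ.cl C

/-- Conjunction of a finite list of formulas. -/
def conjList : List (Fml Cst Rl ar) → Fml Cst Rl ar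
  | [] => .top
  | φ :: L => .and φ (conjList L)

end Depths

/-- A pair `⟨p⁺, p⁻⟩` of sets of formulas. -/
structure Pair (Cst Rl : Type) (ar : Rl → ℕ) where
  pos : Set (Fml Cst Rl ar)
  neg : Set (Fml Cst Rl ar)

namespace Pair

variable {Cst Rl : Type} {ar : Rl → ℕ}

/-- All formulas of the pair are closed. -/
def ClosedP (p : Pair Cst Rl ar) : Prop := ∀ φ ∈ p.pos ∪ p.neg, φ.Closed

/-- Consistency: the conjunction of (finitely many formulas of) `p⁺` does not
derive any formula of `p⁻`. -/
def Consistent (p : Pair Cst Rl ar) : Prop :=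
  ∀ δ ∈ p.neg, ∀ L : List (Fml Cst Rl ar), (∀ χ ∈ L, χ ∈ p.pos) → ¬ Der (conjList L) δ

/-- `Φ`-maximality: every formula of `Φ` is in `p⁺` or in `p⁻`, and `p`
contains only formulas of `Φ`. -/
def MaximalIn (Φ : Set (Fml Cst Rl ar)) (p : Pair Cst Rl ar) : Prop :=
  (∀ χ ∈ Φ, χ ∈ p.pos ∨ χ ∈ p.neg) ∧ p.pos ∪ p.neg ⊆ Φ

/-- Fully witnessed: every negative universal has a constant witness. -/
def FullyWitnessed (p : Pair Cst Rl ar) : Prop :=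
  ∀ (x : ℕ) (φ : Fml Cst Rl ar), Fml.all x φ ∈ p.neg →
    ∃ c : Cst, φ.subst x (.inr c) ∈ p.neg

/-- `Φ`-maximal, consistent, fully witnessed (and closed) pair. -/
def MCW (Φ : Set (Fml Cst Rl ar)) (p : Pair Cst Rl ar) : Prop :=
  p.ClosedP ∧ p.MaximalIn Φ ∧ p.Consistent ∧ p.FullyWitnessed

end Pair

/-- The relation `R̂` between pairs. -/
def hatR {Cst Rl : Type} {ar : Rl → ℕ} (p q : Pair Cst Rl ar) : Prop :=
  (∀ φ : Fml Cst Rl ar, Fml.dia φ ∈ p.neg → φ ∈ q.neg ∧ Fml.dia φ ∈ q.neg) ∧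
  ∃ ψ : Fml Cst Rl ar, Fml.dia ψ ∈ p.pos ∧ Fml.dia ψ ∈ q.neg

/-- A relational model for QRC₁. -/
structure Model (Cst Rl : Type) (ar : Rl → ℕ) where
  W : Type
  R : W → W → Prop
  Dom : W → Type
  finDom : ∀ w, Finite (Dom w)
  η : ∀ w v, R w v → Dom w → Dom v
  I : ∀ w, Cst → Dom w
  J : ∀ w (S : Rl), Set (Fin (ar S) → Dom w)

namespace Model

variable {Cst Rl : Type} {ar : Rl → ℕ} (M : Model Cst Rl ar)

/-- Value of a term under a `w`-assignment. -/
def tval {w : M.W} (g : ℕ → M.Dom w) : ℕ ⊕ Cst → M.Dom w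
  | .inl x => g x
  | .inr c => M.I w c

/-- Kripke satisfaction `M, w ⊩^g φ`. -/
def Sat : (w : M.W) → (g : ℕ → M.Dom w) → Fml Cst Rl ar → Prop
  | _, _, .top => True
  | w, g, .rel S ts => (fun i => M.tval g (ts i)) ∈ M.J w S
  | w, g, .and φ ψ => Sat w g φ ∧ Sat w g ψ
  | w, g, .dia φ => ∃ (v : M.W) (h : M.R w v), Sat v (fun n => M.η w v h (g n)) φ
  | w, g, .all x φ => ∀ h : ℕ → M.Dom w, (∀ y, y ≠ x → h y = g y) → Sat w h φ

/-- Adequate models: transitive accessibility, transitive `η` functions, and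
concordant interpretation of constants. -/
structure Adequate : Prop where
  trans : Transitive M.R
  etaTrans : ∀ {w u v : M.W} (h1 : M.R w u) (h2 : M.R u v) (h3 : M.R w v),
    M.η w v h3 = M.η u v h2 ∘ M.η w u h1
  concord : ∀ {w u : M.W} (h : M.R w u) (c : Cst), M.I u c = M.η w u h (M.I w c)

/-- Constant domain: all worlds have the same domain. -/
def ConstantDomain : Prop := ∀ w v : M.W, M.Dom w = M.Dom v

end Model


namespace Fml

variable {Cst Rl : Type} {ar : Rl → ℕ}

/-- Bound variables. -/
def bv : Fml Cst Rl ar → Set ℕ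
  | .top => ∅
  | .rel _ _ => ∅
  | .and φ ψ => bv φ ∪ bv ψ
  | .dia φ => bv φ
  | .all y φ => {y} ∪ bv φ

/-- Strict bound on all variables occurring (free or bound). -/
def vmax : Fml Cst Rl ar → ℕ
  | .top => 0
  | .rel _ ts => Finset.univ.sup (fun i => match ts i with | .inl x => x + 1 | .inr _ => 0)
  | .and φ ψ => max (vmax φ) (vmax ψ)
  | .dia φ => vmax φ
  | .all y φ => max (y + 1) (vmax φ)

/-- Bound on the number of free variables of any substitution instance. -/
def fvb : Fml Cst Rl ar → ℕ
  | .top => 0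
  | .rel S _ => ar S
  | .and φ ψ => fvb φ + fvb ψ
  | .dia φ => fvb φ
  | .all _ φ => fvb φ + 1

theorem mem_fv_lt_vmax {A : Fml Cst Rl ar} {x : ℕ} (h : x ∈ A.fv) : x < A.vmax := by
  induction A with
  | top => exact absurd h (by simp [fv])
  | rel S ts =>
    obtain ⟨i, hi⟩ := h
    have := Finset.le_sup (f := fun i => match ts i with | .inl x => x + 1 | .inr _ => 0)
      (Finset.mem_univ i)
    simp only [hi] at this
    simpa [vmax] using this
  | and φ ψ ihφ ihψ =>
    rcases h with h | h
    · exact lt_max_of_lt_left (ihφ h)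
    · exact lt_max_of_lt_right (ihψ h)
  | dia φ ih => exact ih h
  | all y φ ih => exact lt_max_of_lt_right (ih h.1)

theorem mem_bv_lt_vmax {A : Fml Cst Rl ar} {x : ℕ} (h : x ∈ A.bv) : x < A.vmax := by
  induction A with
  | top => exact absurd h (by simp [bv])
  | rel S ts => exact absurd h (by simp [bv])
  | and φ ψ ihφ ihψ =>
    rcases h with h | h
    · exact lt_max_of_lt_left (ihφ h)
    · exact lt_max_of_lt_right (ihψ h)
  | dia φ ih => exact ih h
  | all y φ ih =>
    rcases h with h | h
    · exact lt_max_of_lt_left (by simp at h; omega)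
    · exact lt_max_of_lt_right (ih h)

theorem fv_finite (A : Fml Cst Rl ar) : A.fv.Finite :=
  Set.Finite.subset (Set.finite_Iio A.vmax) (fun _ h => mem_fv_lt_vmax h)

theorem ncard_fv_le_fvb (A : Fml Cst Rl ar) : A.fv.ncard ≤ A.fvb := by
  induction A with
  | top => simp [fv, fvb]
  | rel S ts =>
    have hsub : fv (.rel S ts) ⊆ Set.range (fun i : Fin (ar S) =>
        match ts i with | .inl x => x | .inr _ => 0) := by
      rintro x ⟨i, hi⟩
      exact ⟨i, by simp [hi]⟩
    calc (fv (.rel S ts)).ncard ≤ (Set.range (fun i : Fin (ar S) =>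
          match ts i with | .inl x => x | .inr _ => 0)).ncard :=
            Set.ncard_le_ncard hsub (Set.finite_range _)
      _ = ((fun i : Fin (ar S) =>
          match ts i with | .inl x => x | .inr _ => 0) '' Set.univ).ncard := by
            rw [Set.image_univ]
      _ ≤ (Set.univ : Set (Fin (ar S))).ncard := Set.ncard_image_le Set.finite_univ
      _ = ar S := by simp [Set.ncard_univ]
  | and φ ψ ihφ ihψ =>
    calc (fv φ ∪ fv ψ).ncard ≤ (fv φ).ncard + (fv ψ).ncard :=
      Set.ncard_union_le _ _
      _ ≤ _ := Nat.add_le_add ihφ ihψ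
  | dia φ ih => exact ih
  | all y φ ih =>
    calc (fv φ \ {y}).ncard ≤ (fv φ).ncard :=
        Set.ncard_le_ncard Set.diff_subset (fv_finite φ)
      _ ≤ fvb φ := ih
      _ ≤ fvb φ + 1 := Nat.le_succ _

theorem fvb_subst (A : Fml Cst Rl ar) (x : ℕ) (t : ℕ ⊕ Cst) : (A.subst x t).fvb = A.fvb := by
  induction A generalizing x t with
  | top => rfl
  | rel S ts => rfl
  | and φ ψ ihφ ihψ => simp [subst, fvb, ihφ, ihψ]
  | dia φ ih => simp [subst, fvb, ih]
  | all y φ ih => by_cases h : y = x <;> simp [subst, h, fvb, ih]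

theorem bv_subst (A : Fml Cst Rl ar) (x : ℕ) (t : ℕ ⊕ Cst) : (A.subst x t).bv = A.bv := by
  induction A generalizing x t with
  | top => rfl
  | rel S ts => rfl
  | and φ ψ ihφ ihψ => simp [subst, bv, ihφ, ihψ]
  | dia φ ih => simp [subst, bv, ih]
  | all y φ ih => by_cases h : y = x <;> simp [subst, h, bv, ih]

theorem mdepth_subst (A : Fml Cst Rl ar) (x : ℕ) (t : ℕ ⊕ Cst) :
    (A.subst x t).mdepth = A.mdepth := by
  induction A generalizing x t with
  | top => rfl
  | rel S ts => rfl
  | and φ ψ ihφ ihψ => simp [subst, mdepth, ihφ, ihψ]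
  | dia φ ih => simp [subst, mdepth, ih]
  | all y φ ih => by_cases h : y = x <;> simp [subst, h, mdepth, ih]

/-- Constants of a term. -/
def tconsts : ℕ ⊕ Cst → Set Cst
  | .inl _ => ∅
  | .inr c => {c}

theorem consts_subst (A : Fml Cst Rl ar) (x : ℕ) (t : ℕ ⊕ Cst) :
    (A.subst x t).consts ⊆ A.consts ∪ tconsts t := by
  induction A generalizing x t with
  | top => simp [subst, consts]
  | rel S ts =>
    rintro c ⟨i, hi⟩
    rcases h : ts i with y | d
    · simp only [h, substT] at hi
      split at hi
      · right; rw [hi]; rfl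
      · exact absurd hi (by simp)
    · simp only [h, substT] at hi
      left; exact ⟨i, by rw [h, hi]⟩
  | and φ ψ ihφ ihψ =>
    intro c hc
    rcases hc with hc | hc
    · rcases ihφ x t hc with h | h
      · exact Or.inl (Or.inl h)
      · exact Or.inr h
    · rcases ihψ x t hc with h | h
      · exact Or.inl (Or.inr h)
      · exact Or.inr h
  | dia φ ih => exact ih x t
  | all y φ ih =>
    by_cases h : y = x
    · simp only [subst, h, if_pos rfl]
      intro c hc; exact Or.inl hc
    · simp only [subst, if_neg h]
      exact ih x t

theorem subst_of_notin_fv {A : Fml Cst Rl ar} {x : ℕ} (t : ℕ ⊕ Cst) (h : x ∉ A.fv) :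
    A.subst x t = A := by
  induction A generalizing x t with
  | top => rfl
  | rel S ts =>
    simp only [subst]
    congr 1
    funext i
    rcases hi : ts i with y | c
    · simp only [substT]
      rw [if_neg]
      intro hyx
      exact h ⟨i, by rw [hi, hyx]⟩
    · rfl
  | and φ ψ ihφ ihψ =>
    simp only [fv, Set.mem_union, not_or] at h
    simp [subst, ihφ t h.1, ihψ t h.2]
  | dia φ ih =>
    simp only [fv] at h
    simp [subst, ih t h]
  | all y φ ih =>
    by_cases hyx : y = x
    · simp [subst, hyx]
    · simp only [subst, if_neg hyx]
      have : x ∉ fv φ := fun hx => h ⟨hx, fun hxy => hyx (by simpa using hxy.symm ▸ rfl)⟩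
      rw [ih t this]

theorem fv_subst_subset (A : Fml Cst Rl ar) (x : ℕ) (t : ℕ ⊕ Cst) :
    (A.subst x t).fv ⊆ (A.fv \ {x}) ∪ (match t with | .inl v => {v} | .inr _ => ∅) := by
  induction A generalizing x t with
  | top => simp [subst, fv]
  | rel S ts =>
    rintro y ⟨i, hi⟩
    rcases hts : ts i with z | c
    · simp only [hts, substT] at hi
      split at hi
      · right
        rcases t with v | c
        · simp only at hi ⊢; rw [← Sum.inl.inj hi]; rfl
        · exact absurd hi (by simp)
      · rename_i hzx
        left
        refine ⟨⟨i, by rw [hts, hi]⟩, ?_⟩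
        simp only [Set.mem_singleton_iff]
        intro hyx
        exact hzx (by rw [Sum.inl.inj hi, hyx])
    · simp only [hts, substT] at hi
      exact absurd hi (by simp)
  | and φ ψ ihφ ihψ =>
    intro y hy
    rcases hy with hy | hy
    · rcases ihφ x t hy with ⟨h1, h2⟩ | h
      · exact Or.inl ⟨Or.inl h1, h2⟩
      · exact Or.inr h
    · rcases ihψ x t hy with ⟨h1, h2⟩ | h
      · exact Or.inl ⟨Or.inr h1, h2⟩
      · exact Or.inr h
  | dia φ ih => exact ih x t
  | all y φ ih =>
    by_cases h : y = x
    · simp only [subst, h, if_pos rfl]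
      intro z hz
      exact Or.inl ⟨hz, fun hzx => hz.2 (by simpa [h] using hzx)⟩
    · simp only [subst, if_neg h]
      rintro z ⟨hz, hzy⟩
      rcases ih x t hz with ⟨h1, h2⟩ | h1
      · exact Or.inl ⟨⟨h1, hzy⟩, h2⟩
      · exact Or.inr h1

end Fml

namespace Fml

variable {Cst Rl : Type} {ar : Rl → ℕ}

theorem bv_msubst (A : Fml Cst Rl ar) (σ : ℕ → ℕ ⊕ Cst) : (A.msubst σ).bv = A.bv := by
  induction A generalizing σ with
  | top => rfl
  | rel S ts => rfl
  | and φ ψ ihφ ihψ => simp [msubst, bv, ihφ, ihψ]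
  | dia φ ih => simp [msubst, bv, ih]
  | all y φ ih => simp [msubst, bv, ih]

theorem fvb_msubst (A : Fml Cst Rl ar) (σ : ℕ → ℕ ⊕ Cst) : (A.msubst σ).fvb = A.fvb := by
  induction A generalizing σ with
  | top => rfl
  | rel S ts => rfl
  | and φ ψ ihφ ihψ => simp [msubst, fvb, ihφ, ihψ]
  | dia φ ih => simp [msubst, fvb, ih]
  | all y φ ih => simp [msubst, fvb, ih]

theorem consts_msubst (A : Fml Cst Rl ar) (σ : ℕ → ℕ ⊕ Cst)
    (hσ : ∀ y c, σ y ≠ .inr c) : (A.msubst σ).consts ⊆ A.consts := by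
  induction A generalizing σ with
  | top => simp [msubst, consts]
  | rel S ts =>
    rintro c ⟨i, hi⟩
    rcases hts : ts i with y | d
    · simp only [hts] at hi
      exact absurd hi (hσ y c)
    · simp only [hts] at hi
      exact ⟨i, by rw [hts, Sum.inr.inj hi]⟩
  | and φ ψ ihφ ihψ =>
    rintro c (hc | hc)
    · exact Or.inl (ihφ σ hσ hc)
    · exact Or.inr (ihψ σ hσ hc)
  | dia φ ih => exact ih σ hσ
  | all y φ ih =>
    refine ih _ ?_
    intro z c
    by_cases hz : z = y
    · subst hz; simp [Function.update_self]
    · rw [Function.update_of_ne hz]; exact hσ z c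

theorem fv_msubst {A : Fml Cst Rl ar} {σ : ℕ → ℕ ⊕ Cst} {x : ℕ}
    (h : x ∈ (A.msubst σ).fv) : ∃ y ∈ A.fv, σ y = .inl x := by
  induction A generalizing σ with
  | top => exact absurd h (by simp [msubst, fv])
  | rel S ts =>
    obtain ⟨i, hi⟩ := h
    rcases hts : ts i with y | c
    · simp only [hts] at hi
      exact ⟨y, ⟨i, hts⟩, hi⟩
    · simp only [hts] at hi
      exact absurd hi (by simp)
  | and φ ψ ihφ ihψ =>
    rcases h with h | h
    · obtain ⟨y, hy, hσ⟩ := ihφ h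
      exact ⟨y, Or.inl hy, hσ⟩
    · obtain ⟨y, hy, hσ⟩ := ihψ h
      exact ⟨y, Or.inr hy, hσ⟩
  | dia φ ih => exact ih h
  | all z φ ih =>
    obtain ⟨h1, h2⟩ := h
    obtain ⟨y, hy, hσ⟩ := ih h1
    by_cases hyz : y = z
    · subst hyz
      rw [Function.update_self] at hσ
      exact absurd (Sum.inl.inj hσ).symm (by simpa using h2)
    · rw [Function.update_of_ne hyz] at hσ
      exact ⟨y, ⟨hy, hyz⟩, hσ⟩

theorem msubst_congr_fv {A : Fml Cst Rl ar} {σ₁ σ₂ : ℕ → ℕ ⊕ Cst}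
    (h : ∀ y ∈ A.fv, σ₁ y = σ₂ y) : A.msubst σ₁ = A.msubst σ₂ := by
  induction A generalizing σ₁ σ₂ with
  | top => rfl
  | rel S ts =>
    simp only [msubst]
    congr 1
    funext i
    rcases hts : ts i with y | c
    · exact h y ⟨i, hts⟩
    · rfl
  | and φ ψ ihφ ihψ =>
    simp only [msubst]
    rw [ihφ (fun y hy => h y (Or.inl hy)), ihψ (fun y hy => h y (Or.inr hy))]
  | dia φ ih =>
    simp only [msubst]
    rw [ih h]
  | all z φ ih =>
    simp only [msubst]
    congr 1
    refine ih ?_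
    intro y hy
    by_cases hyz : y = z
    · subst hyz; simp [Function.update_self]
    · rw [Function.update_of_ne hyz, Function.update_of_ne hyz]
      exact h y ⟨hy, hyz⟩

theorem msubst_id (A : Fml Cst Rl ar) : A.msubst (fun y => .inl y) = A := by
  induction A with
  | top => rfl
  | rel S ts =>
    simp only [msubst]
    congr 1
    funext i
    rcases hts : ts i with y | c <;> simp [hts]
  | and φ ψ ihφ ihψ => simp only [msubst]; rw [ihφ, ihψ]
  | dia φ ih => simp only [msubst]; rw [ih]
  | all z φ ih =>
    simp only [msubst]
    have : Function.update (fun y => (Sum.inl y : ℕ ⊕ Cst)) z (.inl z)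
        = fun y => (.inl y : ℕ ⊕ Cst) := by
      funext y
      by_cases hy : y = z
      · subst hy; simp
      · rw [Function.update_of_ne hy]
    rw [this, ih]

theorem msubst_subst_cond {A : Fml Cst Rl ar} {σ : ℕ → ℕ ⊕ Cst} {x : ℕ} {t : ℕ ⊕ Cst}
    (h : ∀ y, y ≠ x → σ y ≠ .inl x) :
    (A.msubst σ).subst x t = A.msubst (fun y => substT x t (σ y)) := by
  induction A generalizing σ with
  | top => rfl
  | rel S ts =>
    simp only [msubst, subst]
    congr 1
    funext i
    rcases hts : ts i with y | c <;> simp [hts, substT]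
  | and φ ψ ihφ ihψ => simp only [msubst, subst]; rw [ihφ h, ihψ h]
  | dia φ ih => simp only [msubst, subst]; rw [ih h]
  | all z φ ih =>
    by_cases hzx : z = x
    · subst hzx
      simp only [msubst, subst]
      simp only [reduceIte]
      congr 1
      refine msubst_congr_fv ?_
      intro y _
      by_cases hyz : y = z
      · subst hyz; simp
      · rw [Function.update_of_ne hyz, Function.update_of_ne hyz]
        rcases hσ : σ y with u | c
        · have : u ≠ z := fun hu => h y hyz (by rw [hσ, hu])
          simp [substT, this]
        · rfl
    · simp only [msubst, subst, if_neg hzx]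
      congr 1
      rw [ih (σ := Function.update σ z (.inl z)) ?_]
      · refine msubst_congr_fv ?_
        intro y _
        by_cases hyz : y = z
        · subst hyz; simp [substT, hzx]
        · rw [Function.update_of_ne hyz, Function.update_of_ne hyz]
      · intro y hyx
        by_cases hyz : y = z
        · subst hyz
          rw [Function.update_self]
          intro hc
          exact hzx (Sum.inl.inj hc)
        · rw [Function.update_of_ne hyz]
          exact h y hyx

theorem msubst_subst_bv {A : Fml Cst Rl ar} {σ : ℕ → ℕ ⊕ Cst} {x : ℕ} {t : ℕ ⊕ Cst}
    (h : x ∉ A.bv) :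
    (A.msubst σ).subst x t = A.msubst (fun y => substT x t (σ y)) := by
  induction A generalizing σ with
  | top => rfl
  | rel S ts =>
    simp only [msubst, subst]
    congr 1
    funext i
    rcases hts : ts i with y | c <;> simp [hts, substT]
  | and φ ψ ihφ ihψ =>
    simp only [bv, Set.mem_union, not_or] at h
    simp only [msubst, subst]; rw [ihφ h.1, ihψ h.2]
  | dia φ ih => simp only [msubst, subst]; rw [ih h]
  | all z φ ih =>
    simp only [bv, Set.mem_union, not_or, Set.mem_singleton_iff] at h
    have hzx : z ≠ x := fun hz => h.1 hz.symm
    simp only [msubst, subst, if_neg hzx]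
    congr 1
    rw [ih h.2]
    refine msubst_congr_fv ?_
    intro y _
    by_cases hyz : y = z
    · subst hyz; simp [substT, hzx]
    · rw [Function.update_of_ne hyz, Function.update_of_ne hyz]

theorem subst_subst_cancel {A : Fml Cst Rl ar} {x v : ℕ}
    (hfv : v ∉ A.fv) (hbv : v ∉ A.bv) (hvx : v ≠ x) :
    ((A.subst x (.inl v)).subst v (.inl x)) = A := by
  induction A generalizing x with
  | top => rfl
  | rel S ts =>
    simp only [subst]
    congr 1
    funext i
    rcases hts : ts i with y | c
    · by_cases hyx : y = x
      · subst hyx; simp [hts, substT]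
      · have hyv : y ≠ v := fun hy => hfv ⟨i, by rw [hts, hy]⟩
        simp [hts, substT, hyx, hyv]
    · simp [hts, substT]
  | and φ ψ ihφ ihψ =>
    simp only [fv, bv, Set.mem_union, not_or] at hfv hbv
    simp only [subst]
    rw [ihφ hfv.1 hbv.1 hvx, ihψ hfv.2 hbv.2 hvx]
  | dia φ ih => simp only [subst]; rw [ih hfv hbv hvx]
  | all z φ ih =>
    simp only [bv, Set.mem_union, Set.mem_singleton_iff, not_or] at hbv
    have hvz : v ≠ z := hbv.1
    by_cases hzx : z = x
    · subst hzx
      simp only [subst, if_pos rfl, ↓reduceIte, if_neg (fun h => hvz h.symm : ¬ z = v)]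
      congr 1
      refine subst_of_notin_fv _ ?_
      intro hv
      exact hfv ⟨hv, by simpa using hvz⟩
    · simp only [subst, if_neg hzx, if_neg (fun h => hvz h.symm : ¬ z = v)]
      congr 1
      refine ih ?_ hbv.2 hvx
      intro hv
      exact hfv ⟨hv, by simpa using hvz⟩

theorem freeFor_of_bv {A : Fml Cst Rl ar} {x : ℕ} {t : ℕ ⊕ Cst}
    (h : ∀ u, t = .inl u → u ∉ A.bv) : FreeFor t x A := by
  induction A with
  | top => trivial
  | rel S ts => trivial
  | and φ ψ ihφ ihψ =>
    exact ⟨ihφ (fun u hu hb => h u hu (Or.inl hb)), ihψ (fun u hu hb => h u hu (Or.inr hb))⟩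
  | dia φ ih => exact ih (fun u hu hb => h u hu hb)
  | all z φ ih =>
    right
    constructor
    · intro ht
      exact h z ht (Or.inl rfl)
    · exact ih (fun u hu hb => h u hu (Or.inr hb))

theorem freeFor_inl_self (A : Fml Cst Rl ar) (x : ℕ) : FreeFor (.inl x) x A := by
  induction A with
  | top => trivial
  | rel S ts => trivial
  | and φ ψ ihφ ihψ => exact ⟨ihφ, ihψ⟩
  | dia φ ih => exact ih
  | all z φ ih =>
    by_cases hxz : x = z
    · subst hxz
      left
      simp [fv]
    · right
      exact ⟨fun hc => hxz (Sum.inl.inj hc), ih⟩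

theorem freeFor_cancel {A : Fml Cst Rl ar} {x v : ℕ}
    (hfv : v ∉ A.fv) (hbv : v ∉ A.bv) :
    FreeFor (.inl x) v (A.subst x (.inl v)) := by
  induction A generalizing x with
  | top => trivial
  | rel S ts => trivial
  | and φ ψ ihφ ihψ =>
    simp only [fv, bv, Set.mem_union, not_or] at hfv hbv
    exact ⟨ihφ hfv.1 hbv.1, ihψ hfv.2 hbv.2⟩
  | dia φ ih => exact ih hfv hbv
  | all z φ ih =>
    simp only [bv, Set.mem_union, Set.mem_singleton_iff, not_or] at hbv
    have hvz : v ≠ z := hbv.1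
    by_cases hzx : z = x
    · subst hzx
      simp only [subst, if_pos rfl]
      left
      intro hv
      exact hfv hv
    · simp only [subst, if_neg hzx]
      right
      refine ⟨fun hc => hzx (Sum.inl.inj hc).symm, ?_⟩
      refine ih ?_ hbv.2
      intro hv
      exact hfv ⟨hv, by simpa using hvz⟩

theorem freeFor_shift {A : Fml Cst Rl ar} {σ : ℕ → ℕ ⊕ Cst} {a N : ℕ}
    (hN : ∀ y ∈ A.fv, y < N) (hbN : ∀ y ∈ A.bv, y < N) (ha : a < N)
    (hσ : ∀ y, σ y = .inl (a + N) → y = a ∨ N ≤ y) :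
    FreeFor (.inl a) (a + N) (A.msubst σ) := by
  induction A generalizing σ with
  | top => trivial
  | rel S ts => trivial
  | and φ ψ ihφ ihψ =>
    refine ⟨ihφ (fun y hy => hN y (Or.inl hy)) (fun y hy => hbN y (Or.inl hy)) hσ,
      ihψ (fun y hy => hN y (Or.inr hy)) (fun y hy => hbN y (Or.inr hy)) hσ⟩
  | dia φ ih => exact ih hN hbN hσ
  | all z φ ih =>
    have hz : z < N := hbN z (Or.inl rfl)
    have hfvφ : ∀ y ∈ φ.fv, y < N := by
      intro y hy
      by_cases hyz : y = z
      · subst hyz; exact hz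
      · exact hN y ⟨hy, hyz⟩
    have hbvφ : ∀ y ∈ φ.bv, y < N := fun y hy => hbN y (Or.inr hy)
    by_cases hza : z = a
    · subst hza
      left
      simp only [fv, Set.mem_diff, Set.mem_singleton_iff, not_and, not_not]
      intro hmem
      obtain ⟨y, hy, hσy⟩ := fv_msubst hmem
      by_cases hyz : y = z
      · subst hyz
        rw [Function.update_self] at hσy
        have := Sum.inl.inj hσy
        omega
      · rw [Function.update_of_ne hyz] at hσy
        rcases hσ y hσy with h | h
        · exact absurd h hyz
        · exact absurd (hfvφ y hy) (by omega)
    · right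
      constructor
      · intro hc
        exact hza (Sum.inl.inj hc).symm
      · refine ih hfvφ hbvφ ?_
        intro y hy
        by_cases hyz : y = z
        · subst hyz
          rw [Function.update_self] at hy
          have := Sum.inl.inj hy
          omega
        · rw [Function.update_of_ne hyz] at hy
          exact hσ y hy

end Fml

variable {Cst Rl : Type} {ar : Rl → ℕ}

/-- The list of "surface diamonds" of a formula, relative to a domain list `Dl`. -/
def surfaceDias (Dl : List (ℕ ⊕ Cst)) : Fml Cst Rl ar → List (Fml Cst Rl ar)
  | .top => []
  | .rel _ _ => []
  | .and φ ψ => surfaceDias Dl φ ++ surfaceDias Dl ψ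
  | .dia φ => [φ]
  | .all x φ => Dl.flatMap (fun d => surfaceDias Dl (φ.subst x d))
termination_by φ => φ.size
decreasing_by all_goals (simp [Fml.size, Fml.size_subst]; try omega)

theorem mem_sD_mdepth {Dl : List (ℕ ⊕ Cst)} :
    ∀ (χ B : Fml Cst Rl ar), B ∈ surfaceDias Dl χ → B.mdepth < χ.mdepth := by
  intro χ
  induction χ using surfaceDias.induct with
  | case1 => intro B hB; simp [surfaceDias] at hB
  | case2 => intro B hB; simp [surfaceDias] at hB
  | case3 φ ψ ihφ ihψ =>
    intro B hB
    simp only [surfaceDias] at hB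
    rcases List.mem_append.mp hB with h | h
    · exact lt_max_of_lt_left (ihφ B h)
    · exact lt_max_of_lt_right (ihψ B h)
  | case4 φ =>
    intro B hB
    simp only [surfaceDias, List.mem_singleton] at hB
    subst hB
    simp [Fml.mdepth]
  | case5 x φ ih =>
    intro B hB
    simp only [surfaceDias, List.mem_flatMap] at hB
    obtain ⟨d, hd, hB⟩ := hB
    have := ih d B hB
    rwa [Fml.mdepth_subst] at this

theorem mem_sD_fvb {Dl : List (ℕ ⊕ Cst)} :
    ∀ (χ B : Fml Cst Rl ar), B ∈ surfaceDias Dl χ → B.fvb ≤ χ.fvb := by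
  intro χ
  induction χ using surfaceDias.induct with
  | case1 => intro B hB; simp [surfaceDias] at hB
  | case2 => intro B hB; simp [surfaceDias] at hB
  | case3 φ ψ ihφ ihψ =>
    intro B hB
    simp only [surfaceDias] at hB
    rcases List.mem_append.mp hB with h | h
    · exact le_trans (ihφ B h) (by simp [Fml.fvb])
    · exact le_trans (ihψ B h) (by simp [Fml.fvb])
  | case4 φ =>
    intro B hB
    simp only [surfaceDias, List.mem_singleton] at hB
    subst hB
    simp [Fml.fvb]
  | case5 x φ ih =>
    intro B hB
    simp only [surfaceDias, List.mem_flatMap] at hB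
    obtain ⟨d, hd, hB⟩ := hB
    have := ih d B hB
    rw [Fml.fvb_subst] at this
    exact le_trans this (by simp [Fml.fvb])

theorem mem_sD_bv {Dl : List (ℕ ⊕ Cst)} :
    ∀ (χ B : Fml Cst Rl ar), B ∈ surfaceDias Dl χ → B.bv ⊆ χ.bv := by
  intro χ
  induction χ using surfaceDias.induct with
  | case1 => intro B hB; simp [surfaceDias] at hB
  | case2 => intro B hB; simp [surfaceDias] at hB
  | case3 φ ψ ihφ ihψ =>
    intro B hB
    simp only [surfaceDias] at hB
    rcases List.mem_append.mp hB with h | h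
    · exact subset_trans (ihφ B h) Set.subset_union_left
    · exact subset_trans (ihψ B h) Set.subset_union_right
  | case4 φ =>
    intro B hB
    simp only [surfaceDias, List.mem_singleton] at hB
    subst hB
    exact subset_refl _
  | case5 x φ ih =>
    intro B hB
    simp only [surfaceDias, List.mem_flatMap] at hB
    obtain ⟨d, hd, hB⟩ := hB
    have := ih d B hB
    rw [Fml.bv_subst] at this
    exact subset_trans this Set.subset_union_right

theorem mem_sD_consts {Dl : List (ℕ ⊕ Cst)} :
    ∀ (χ B : Fml Cst Rl ar), B ∈ surfaceDias Dl χ →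
      B.consts ⊆ χ.consts ∪ {c | (Sum.inr c : ℕ ⊕ Cst) ∈ Dl} := by
  intro χ
  induction χ using surfaceDias.induct with
  | case1 => intro B hB; simp [surfaceDias] at hB
  | case2 => intro B hB; simp [surfaceDias] at hB
  | case3 φ ψ ihφ ihψ =>
    intro B hB
    simp only [surfaceDias] at hB
    rcases List.mem_append.mp hB with h | h
    · exact subset_trans (ihφ B h) (Set.union_subset_union_left _ Set.subset_union_left)
    · exact subset_trans (ihψ B h) (Set.union_subset_union_left _ Set.subset_union_right)
  | case4 φ =>
    intro B hB
    simp only [surfaceDias, List.mem_singleton] at hB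
    subst hB
    exact Set.subset_union_left
  | case5 x φ ih =>
    intro B hB
    simp only [surfaceDias, List.mem_flatMap] at hB
    obtain ⟨d, hd, hB⟩ := hB
    refine subset_trans (ih d B hB) ?_
    intro c hc
    rcases hc with hc | hc
    · rcases Fml.consts_subst φ x d hc with h | h
      · exact Or.inl h
      · right
        rcases d with u | e
        · exact absurd h (by simp [Fml.tconsts])
        · have : c = e := by simpa [Fml.tconsts] using h
          subst this
          exact hd
    · exact Or.inr hc

theorem mem_sD_der {Dl : List (ℕ ⊕ Cst)} :
    ∀ (χ B : Fml Cst Rl ar), (∀ u, (Sum.inl u : ℕ ⊕ Cst) ∈ Dl → u ∉ χ.bv) →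
      B ∈ surfaceDias Dl χ → Der χ (.dia B) := by
  intro χ
  induction χ using surfaceDias.induct with
  | case1 => intro B _ hB; simp [surfaceDias] at hB
  | case2 => intro B _ hB; simp [surfaceDias] at hB
  | case3 φ ψ ihφ ihψ =>
    intro B hbv hB
    simp only [surfaceDias] at hB
    rcases List.mem_append.mp hB with h | h
    · exact Der.cut (Der.andE1 _ _) (ihφ B (fun u hu hb => hbv u hu (Or.inl hb)) h)
    · exact Der.cut (Der.andE2 _ _) (ihψ B (fun u hu hb => hbv u hu (Or.inr hb)) h)
  | case4 φ =>
    intro B _ hB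
    simp only [surfaceDias, List.mem_singleton] at hB
    subst hB
    exact Der.refl _
  | case5 x φ ih =>
    intro B hbv hB
    simp only [surfaceDias, List.mem_flatMap] at hB
    obtain ⟨d, hd, hB⟩ := hB
    have hbv' : ∀ u, (Sum.inl u : ℕ ⊕ Cst) ∈ Dl → u ∉ (φ.subst x d).bv := by
      intro u hu hb
      rw [Fml.bv_subst] at hb
      exact hbv u hu (Or.inr hb)
    exact Der.allE x d (ih d B hbv' hB)
      (Fml.freeFor_of_bv (fun u hu hb => hbv u (hu ▸ hd) (Or.inr hb)))

/-- All strict descendants of a node. -/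
def tcSucc (Dl : List (ℕ ⊕ Cst)) (χ : Fml Cst Rl ar) : List (Fml Cst Rl ar) :=
  (surfaceDias Dl χ).attach.flatMap (fun B => B.1 :: tcSucc Dl B.1)
termination_by χ.mdepth
decreasing_by exact mem_sD_mdepth _ _ B.2

theorem mem_tcSucc_iff {Dl : List (ℕ ⊕ Cst)} {χ B : Fml Cst Rl ar} :
    B ∈ tcSucc Dl χ ↔ ∃ a ∈ surfaceDias Dl χ, B = a ∨ B ∈ tcSucc Dl a := by
  conv_lhs => rw [tcSucc]
  simp [List.mem_flatMap, List.mem_attach]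

theorem mem_tcSucc_mdepth_aux {Dl : List (ℕ ⊕ Cst)} :
    ∀ (n : ℕ) (χ B : Fml Cst Rl ar), χ.mdepth ≤ n → B ∈ tcSucc Dl χ →
      B.mdepth < χ.mdepth := by
  intro n
  induction n with
  | zero =>
    intro χ B hn h
    rw [mem_tcSucc_iff] at h
    obtain ⟨a, ha, _⟩ := h
    exact absurd (mem_sD_mdepth _ _ ha) (by omega)
  | succ n ih =>
    intro χ B hn h
    rw [mem_tcSucc_iff] at h
    obtain ⟨a, ha, rfl | h⟩ := h
    · exact mem_sD_mdepth _ _ ha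
    · have h1 := mem_sD_mdepth _ _ ha
      exact lt_trans (ih a B (by omega) h) h1

theorem mem_tcSucc_mdepth {Dl : List (ℕ ⊕ Cst)} {χ B : Fml Cst Rl ar}
    (h : B ∈ tcSucc Dl χ) : B.mdepth < χ.mdepth :=
  mem_tcSucc_mdepth_aux χ.mdepth χ B le_rfl h

theorem tcSucc_trans_aux {Dl : List (ℕ ⊕ Cst)} :
    ∀ (n : ℕ) (χ a b : Fml Cst Rl ar), χ.mdepth ≤ n →
      a ∈ tcSucc Dl χ → b ∈ tcSucc Dl a → b ∈ tcSucc Dl χ := by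
  intro n
  induction n with
  | zero =>
    intro χ a b hn h1 _
    exact absurd (mem_tcSucc_mdepth h1) (by omega)
  | succ n ih =>
    intro χ a b hn h1 h2
    rw [mem_tcSucc_iff] at h1 ⊢
    obtain ⟨c, hc, rfl | h1⟩ := h1
    · exact ⟨_, hc, Or.inr h2⟩
    · have hm := mem_sD_mdepth _ _ hc
      exact ⟨_, hc, Or.inr (ih c a b (by omega) h1 h2)⟩

theorem tcSucc_trans {Dl : List (ℕ ⊕ Cst)} {χ a b : Fml Cst Rl ar}
    (h1 : a ∈ tcSucc Dl χ) (h2 : b ∈ tcSucc Dl a) : b ∈ tcSucc Dl χ :=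
  tcSucc_trans_aux χ.mdepth χ a b le_rfl h1 h2

theorem mem_tcSucc_fvb_aux {Dl : List (ℕ ⊕ Cst)} :
    ∀ (n : ℕ) (χ B : Fml Cst Rl ar), χ.mdepth ≤ n → B ∈ tcSucc Dl χ →
      B.fvb ≤ χ.fvb := by
  intro n
  induction n with
  | zero =>
    intro χ B hn h
    exact absurd (mem_tcSucc_mdepth h) (by omega)
  | succ n ih =>
    intro χ B hn h
    rw [mem_tcSucc_iff] at h
    obtain ⟨a, ha, rfl | h⟩ := h
    · exact mem_sD_fvb _ _ ha
    · have hm := mem_sD_mdepth _ _ ha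
      exact le_trans (ih a B (by omega) h) (mem_sD_fvb _ _ ha)

theorem mem_tcSucc_fvb {Dl : List (ℕ ⊕ Cst)} {χ B : Fml Cst Rl ar}
    (h : B ∈ tcSucc Dl χ) : B.fvb ≤ χ.fvb :=
  mem_tcSucc_fvb_aux χ.mdepth χ B le_rfl h

theorem mem_tcSucc_bv_aux {Dl : List (ℕ ⊕ Cst)} :
    ∀ (n : ℕ) (χ B : Fml Cst Rl ar), χ.mdepth ≤ n → B ∈ tcSucc Dl χ →
      B.bv ⊆ χ.bv := by
  intro n
  induction n with
  | zero =>
    intro χ B hn h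
    exact absurd (mem_tcSucc_mdepth h) (by omega)
  | succ n ih =>
    intro χ B hn h
    rw [mem_tcSucc_iff] at h
    obtain ⟨a, ha, rfl | h⟩ := h
    · exact mem_sD_bv _ _ ha
    · have hm := mem_sD_mdepth _ _ ha
      exact subset_trans (ih a B (by omega) h) (mem_sD_bv _ _ ha)

theorem mem_tcSucc_bv {Dl : List (ℕ ⊕ Cst)} {χ B : Fml Cst Rl ar}
    (h : B ∈ tcSucc Dl χ) : B.bv ⊆ χ.bv :=
  mem_tcSucc_bv_aux χ.mdepth χ B le_rfl h

theorem mem_tcSucc_consts_aux {Dl : List (ℕ ⊕ Cst)} :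
    ∀ (n : ℕ) (χ B : Fml Cst Rl ar), χ.mdepth ≤ n → B ∈ tcSucc Dl χ →
      B.consts ⊆ χ.consts ∪ {c | (Sum.inr c : ℕ ⊕ Cst) ∈ Dl} := by
  intro n
  induction n with
  | zero =>
    intro χ B hn h
    exact absurd (mem_tcSucc_mdepth h) (by omega)
  | succ n ih =>
    intro χ B hn h
    rw [mem_tcSucc_iff] at h
    obtain ⟨a, ha, rfl | h⟩ := h
    · exact mem_sD_consts _ _ ha
    · have hm := mem_sD_mdepth _ _ ha
      refine subset_trans (ih a B (by omega) h) ?_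
      refine Set.union_subset ?_ Set.subset_union_right
      exact mem_sD_consts _ _ ha

theorem mem_tcSucc_consts {Dl : List (ℕ ⊕ Cst)} {χ B : Fml Cst Rl ar}
    (h : B ∈ tcSucc Dl χ) :
    B.consts ⊆ χ.consts ∪ {c | (Sum.inr c : ℕ ⊕ Cst) ∈ Dl} :=
  mem_tcSucc_consts_aux χ.mdepth χ B le_rfl h

theorem mem_tcSucc_der_aux {Dl : List (ℕ ⊕ Cst)} :
    ∀ (n : ℕ) (χ B : Fml Cst Rl ar), χ.mdepth ≤ n →
      (∀ u, (Sum.inl u : ℕ ⊕ Cst) ∈ Dl → u ∉ χ.bv) →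
      B ∈ tcSucc Dl χ → Der χ (.dia B) := by
  intro n
  induction n with
  | zero =>
    intro χ B hn _ h
    exact absurd (mem_tcSucc_mdepth h) (by omega)
  | succ n ih =>
    intro χ B hn hbv h
    rw [mem_tcSucc_iff] at h
    obtain ⟨a, ha, rfl | h⟩ := h
    · exact mem_sD_der _ _ hbv ha
    · have hm := mem_sD_mdepth _ _ ha
      have hda : Der χ (.dia a) := mem_sD_der _ _ hbv ha
      have hbva : ∀ u, (Sum.inl u : ℕ ⊕ Cst) ∈ Dl → u ∉ a.bv :=
        fun u hu hb => hbv u hu (mem_sD_bv _ _ ha hb)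
      have hd : Der a (.dia B) := ih a B (by omega) hbva h
      exact Der.cut (Der.cut hda (Der.diaMono hd)) (Der.diaTrans _)

theorem mem_tcSucc_der {Dl : List (ℕ ⊕ Cst)} {χ B : Fml Cst Rl ar}
    (hbv : ∀ u, (Sum.inl u : ℕ ⊕ Cst) ∈ Dl → u ∉ χ.bv)
    (h : B ∈ tcSucc Dl χ) : Der χ (.dia B) :=
  mem_tcSucc_der_aux χ.mdepth χ B le_rfl hbv h

/-- `Part Dl A χ`: `A` is a surface part of `χ`, unwrapping conjunctions and
universal quantifiers instantiated by elements of `Dl`. -/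
inductive Part (Dl : List (ℕ ⊕ Cst)) : Fml Cst Rl ar → Fml Cst Rl ar → Prop
  | refl (A) : Part Dl A A
  | andl {A B C} : Part Dl A B → Part Dl A (.and B C)
  | andr {A B C} : Part Dl A C → Part Dl A (.and B C)
  | alli {A B : Fml Cst Rl ar} {x : ℕ} {d : ℕ ⊕ Cst} (hd : d ∈ Dl) :
      Part Dl A (B.subst x d) → Part Dl A (.all x B)

theorem part_der {Dl : List (ℕ ⊕ Cst)} {A χ : Fml Cst Rl ar}
    (h : Part Dl A χ) (hbv : ∀ u, (Sum.inl u : ℕ ⊕ Cst) ∈ Dl → u ∉ χ.bv) :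
    Der χ A := by
  induction h with
  | refl => exact Der.refl A
  | andl _ ih =>
    exact Der.cut (Der.andE1 _ _) (ih (fun u hu hb => hbv u hu (Or.inl hb)))
  | andr _ ih =>
    exact Der.cut (Der.andE2 _ _) (ih (fun u hu hb => hbv u hu (Or.inr hb)))
  | alli hd _ ih =>
    refine Der.allE _ _ (ih ?_) ?_
    · intro u hu hb
      rw [Fml.bv_subst] at hb
      exact hbv u hu (Or.inr hb)
    · exact Fml.freeFor_of_bv (fun u hu hb => hbv u (hu ▸ hd) (Or.inr hb))

theorem part_andl {Dl : List (ℕ ⊕ Cst)} {A B χ : Fml Cst Rl ar}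
    (h : Part Dl (.and A B) χ) : Part Dl A χ := by
  generalize hE : Fml.and A B = E at h
  induction h with
  | refl => exact hE ▸ Part.andl (Part.refl A)
  | andl _ ih => exact Part.andl ih
  | andr _ ih => exact Part.andr ih
  | alli hd _ ih => exact Part.alli hd ih

theorem part_andr {Dl : List (ℕ ⊕ Cst)} {A B χ : Fml Cst Rl ar}
    (h : Part Dl (.and A B) χ) : Part Dl B χ := by
  generalize hE : Fml.and A B = E at h
  induction h with
  | refl => exact hE ▸ Part.andr (Part.refl B)
  | andl _ ih => exact Part.andl ih
  | andr _ ih => exact Part.andr ih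
  | alli hd _ ih => exact Part.alli hd ih

theorem part_alli {Dl : List (ℕ ⊕ Cst)} {A : Fml Cst Rl ar} {x : ℕ} {χ : Fml Cst Rl ar}
    {d : ℕ ⊕ Cst} (h : Part Dl (.all x A) χ) (hd : d ∈ Dl) :
    Part Dl (A.subst x d) χ := by
  generalize hE : Fml.all x A = E at h
  induction h with
  | refl => exact hE ▸ Part.alli hd (Part.refl _)
  | andl _ ih => exact Part.andl ih
  | andr _ ih => exact Part.andr ih
  | alli hd' _ ih => exact Part.alli hd' ih

theorem part_dia {Dl : List (ℕ ⊕ Cst)} {A χ : Fml Cst Rl ar}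
    (h : Part Dl (.dia A) χ) : A ∈ surfaceDias Dl χ := by
  generalize hE : Fml.dia A = E at h
  induction h with
  | refl => subst hE; simp [surfaceDias]
  | andl _ ih => simp only [surfaceDias]; exact List.mem_append.mpr (Or.inl ih)
  | andr _ ih => simp only [surfaceDias]; exact List.mem_append.mpr (Or.inr ih)
  | alli hd _ ih =>
    simp only [surfaceDias, List.mem_flatMap]
    exact ⟨_, hd, ih⟩

variable {Cst Rl : Type} {ar : Rl → ℕ}

theorem Fml.consts_finite (A : Fml Cst Rl ar) : A.consts.Finite := by
  induction A with
  | top => simp [Fml.consts]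
  | rel S ts =>
    have : Fml.consts (.rel S ts) ⊆ ⋃ i : Fin (ar S), {c | ts i = Sum.inr c} := by
      rintro c ⟨i, hi⟩
      exact Set.mem_iUnion.mpr ⟨i, hi⟩
    refine Set.Finite.subset (Set.finite_iUnion ?_) this
    intro i
    refine Set.Subsingleton.finite ?_
    intro a ha b hb
    simp only [Set.mem_setOf_eq] at ha hb
    rw [ha] at hb
    exact Sum.inr.inj hb
  | and φ ψ ihφ ihψ => exact Set.Finite.union ihφ ihψ
  | dia φ ih => exact ih
  | all y φ ih => exact ih

noncomputable section
open Classical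
open scoped Classical

variable (φ ψ : Fml Cst Rl ar)

/-- Bound for "low" (original) variables. -/
def NN : ℕ := max φ.vmax ψ.vmax + 1

/-- Number of extra fresh variables needed. -/
def KK : ℕ := φ.fvb + ψ.fvb + 1

def poolVars : List ℕ := (List.range (NN φ ψ + KK φ ψ)).map (· + NN φ ψ)

def cstList : List Cst := ((φ.consts_finite.union ψ.consts_finite).toFinset).toList

/-- The domain list: fresh variables together with all constants of `φ` and `ψ`. -/
def Dlist : List (ℕ ⊕ Cst) := (poolVars φ ψ).map Sum.inl ++ (cstList φ ψ).map Sum.inr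

/-- Constants available in the domain. -/
def CD : Set Cst := {c | (Sum.inr c : ℕ ⊕ Cst) ∈ Dlist φ ψ}

theorem mem_inl_Dlist {u : ℕ} :
    (Sum.inl u : ℕ ⊕ Cst) ∈ Dlist φ ψ ↔ NN φ ψ ≤ u ∧ u < NN φ ψ + (NN φ ψ + KK φ ψ) := by
  simp only [Dlist, List.mem_append, List.mem_map, poolVars, List.mem_range]
  constructor
  · rintro (⟨v, ⟨i, hi, rfl⟩, hv⟩ | ⟨c, _, hc⟩)
    · have := Sum.inl.inj hv
      omega
    · exact absurd hc (by simp)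
  · rintro ⟨h1, h2⟩
    exact Or.inl ⟨u, ⟨u - NN φ ψ, by omega, by omega⟩, rfl⟩

theorem inl_Dlist_not_low {u : ℕ} (h : (Sum.inl u : ℕ ⊕ Cst) ∈ Dlist φ ψ) :
    ¬ u < NN φ ψ := by
  have := (mem_inl_Dlist φ ψ).mp h
  omega

theorem mem_inr_Dlist {c : Cst} :
    (Sum.inr c : ℕ ⊕ Cst) ∈ Dlist φ ψ ↔ c ∈ φ.consts ∪ ψ.consts := by
  simp only [Dlist, List.mem_append, List.mem_map, cstList]
  constructor
  · rintro (⟨v, _, hv⟩ | ⟨d, hd, hdc⟩)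
    · exact absurd hv (by simp)
    · rw [← Sum.inr.inj hdc]
      simpa using (Finset.mem_toList.mp hd)
  · intro h
    refine Or.inr ⟨c, ?_, rfl⟩
    rw [Finset.mem_toList, Set.Finite.mem_toFinset]
    exact h

theorem consts_phi_CD : φ.consts ⊆ CD φ ψ := by
  intro c hc
  exact (mem_inr_Dlist φ ψ).mpr (Or.inl hc)

theorem consts_psi_CD : ψ.consts ⊆ CD φ ψ := by
  intro c hc
  exact (mem_inr_Dlist φ ψ).mpr (Or.inr hc)

theorem bv_phi_low {u : ℕ} (h : u ∈ φ.bv) : u < NN φ ψ :=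
  lt_of_lt_of_le (Fml.mem_bv_lt_vmax h) (by simp [NN]; omega)

theorem bv_psi_low {u : ℕ} (h : u ∈ ψ.bv) : u < NN φ ψ :=
  lt_of_lt_of_le (Fml.mem_bv_lt_vmax h) (by simp [NN]; omega)

theorem fv_phi_low {u : ℕ} (h : u ∈ φ.fv) : u < NN φ ψ :=
  lt_of_lt_of_le (Fml.mem_fv_lt_vmax h) (by simp [NN]; omega)

theorem fv_psi_low {u : ℕ} (h : u ∈ ψ.fv) : u < NN φ ψ :=
  lt_of_lt_of_le (Fml.mem_fv_lt_vmax h) (by simp [NN]; omega)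

def σr : ℕ → ℕ ⊕ Cst := fun x => .inl (x + NN φ ψ)

/-- The root world. -/
def root : Fml Cst Rl ar := φ.msubst (σr φ ψ)

/-- The list of all worlds. -/
def nodeL : List (Fml Cst Rl ar) := root φ ψ :: tcSucc (Dlist φ ψ) (root φ ψ)

theorem root_bv : (root φ ψ).bv = φ.bv := Fml.bv_msubst _ _
theorem root_fvb : (root φ ψ).fvb = φ.fvb := Fml.fvb_msubst _ _
theorem root_consts : (root φ ψ).consts ⊆ CD φ ψ :=
  subset_trans (Fml.consts_msubst _ _ (fun y c => by simp [σr])) (consts_phi_CD φ ψ)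

/-- Invariants of all nodes. -/
theorem nodeInv {χ : Fml Cst Rl ar} (h : χ ∈ nodeL φ ψ) :
    (∀ u ∈ χ.bv, u < NN φ ψ) ∧ χ.consts ⊆ CD φ ψ ∧ χ.fvb ≤ φ.fvb := by
  rcases List.mem_cons.mp h with rfl | h
  · exact ⟨fun u hu => bv_phi_low φ ψ ((root_bv φ ψ) ▸ hu), root_consts φ ψ,
      le_of_eq (root_fvb φ ψ)⟩
  · refine ⟨?_, ?_, ?_⟩
    · intro u hu
      have := mem_tcSucc_bv h hu
      rw [root_bv] at this
      exact bv_phi_low φ ψ this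
    · refine subset_trans (mem_tcSucc_consts h) ?_
      exact Set.union_subset (root_consts φ ψ) (fun c hc => hc)
    · exact le_trans (mem_tcSucc_fvb h) (le_of_eq (root_fvb φ ψ))

theorem node_bv_cond {χ : Fml Cst Rl ar} (h : χ ∈ nodeL φ ψ) :
    ∀ u, (Sum.inl u : ℕ ⊕ Cst) ∈ Dlist φ ψ → u ∉ χ.bv :=
  fun u hu hb => inl_Dlist_not_low φ ψ hu ((nodeInv φ ψ h).1 u hb)

theorem node_closed {χ B : Fml Cst Rl ar} (h : χ ∈ nodeL φ ψ)
    (hB : B ∈ tcSucc (Dlist φ ψ) χ) : B ∈ nodeL φ ψ := by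
  rcases List.mem_cons.mp h with rfl | h
  · exact List.mem_cons_of_mem _ hB
  · exact List.mem_cons_of_mem _ (tcSucc_trans h hB)

/-- Freshness: we may always choose a pool variable avoiding a small set. -/
theorem fresh_var (E : Set ℕ) (hE : E.Finite) (hcard : E.ncard < NN φ ψ + KK φ ψ) :
    ∃ v, (Sum.inl v : ℕ ⊕ Cst) ∈ Dlist φ ψ ∧ v ∉ E := by
  by_contra hc
  push_neg at hc
  have hsub : ↑((Finset.range (NN φ ψ + KK φ ψ)).image (· + NN φ ψ)) ⊆ E := by
    intro v hv
    simp only [Finset.coe_image, Set.mem_image, Finset.coe_range, Set.mem_Iio] at hv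
    obtain ⟨i, hi, rfl⟩ := hv
    refine hc _ ((mem_inl_Dlist φ ψ).mpr (by omega))
  have hcard2 : ((Finset.range (NN φ ψ + KK φ ψ)).image (· + NN φ ψ)).card
      = NN φ ψ + KK φ ψ := by
    rw [Finset.card_image_of_injective _ (add_left_injective _), Finset.card_range]
  have := Set.ncard_le_ncard hsub hE
  rw [Set.ncard_coe_finset, hcard2] at this
  omega

/-- The counter-model. -/
def theModel : Model Cst Rl ar where
  W := {χ : Fml Cst Rl ar // χ ∈ nodeL φ ψ}
  R a b := b.val ∈ tcSucc (Dlist φ ψ) a.val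
  Dom _ := {t : ℕ ⊕ Cst // t ∈ Dlist φ ψ}
  finDom _ := (List.finite_toSet _).to_subtype
  η _ _ _ d := d
  I _ c := @dite _ ((Sum.inr c : ℕ ⊕ Cst) ∈ Dlist φ ψ) (Classical.dec _)
    (fun h => ⟨_, h⟩)
    (fun _ => ⟨Sum.inl (NN φ ψ), (mem_inl_Dlist φ ψ).mpr ⟨le_rfl, by simp [KK]⟩⟩)
  J w S := {f | Der w.val (.rel S (fun i => (f i).val))}

/-- The root assignment. -/
def gZero : ℕ → {t : ℕ ⊕ Cst // t ∈ Dlist φ ψ} := fun x =>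
  @dite _ ((Sum.inl (x + NN φ ψ) : ℕ ⊕ Cst) ∈ Dlist φ ψ) (Classical.dec _)
    (fun h => ⟨_, h⟩)
    (fun _ => ⟨Sum.inl (NN φ ψ), (mem_inl_Dlist φ ψ).mpr ⟨le_rfl, by simp [KK]⟩⟩)

theorem gZero_val {x : ℕ} (hx : x < NN φ ψ + KK φ ψ) :
    (gZero φ ψ x).val = Sum.inl (x + NN φ ψ) := by
  rw [gZero, dif_pos ((mem_inl_Dlist φ ψ).mpr (by omega))]

/-- Substitution used for the recovery of derivability. -/
def σL (L : List ℕ) : ℕ → ℕ ⊕ Cst := fun y => if y ∈ L then .inl (y + NN φ ψ) else .inl y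

theorem recover : ∀ (L : List ℕ), L.Nodup → (∀ a ∈ L, a < NN φ ψ) →
    Der (φ.msubst (σL φ ψ L)) (ψ.msubst (σL φ ψ L)) → Der φ ψ := by
  intro L
  induction L with
  | nil =>
    intro _ _ h
    have he : σL φ ψ [] = fun y => (.inl y : ℕ ⊕ Cst) := by
      funext y; simp [σL]
    rw [he, Fml.msubst_id, Fml.msubst_id] at h
    exact h
  | cons a L ih =>
    intro hnd hlow h
    have ha : a < NN φ ψ := hlow a (List.mem_cons_self)
    have hσ : ∀ y, σL φ ψ (a :: L) y = .inl (a + NN φ ψ) → y = a ∨ NN φ ψ ≤ y := by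
      intro y hy
      by_cases hyL : y ∈ a :: L
      · rw [σL, if_pos hyL] at hy
        have := Sum.inl.inj hy
        omega
      · rw [σL, if_neg hyL] at hy
        have := Sum.inl.inj hy
        omega
    have ff1 : Fml.FreeFor (.inl a) (a + NN φ ψ) (φ.msubst (σL φ ψ (a :: L))) :=
      Fml.freeFor_shift (fun y hy => fv_phi_low φ ψ hy) (fun y hy => bv_phi_low φ ψ hy)
        ha hσ
    have ff2 : Fml.FreeFor (.inl a) (a + NN φ ψ) (ψ.msubst (σL φ ψ (a :: L))) :=
      Fml.freeFor_shift (fun y hy => fv_psi_low φ ψ hy) (fun y hy => bv_psi_low φ ψ hy)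
        ha hσ
    have h2 := Der.inst (a + NN φ ψ) (.inl a) h ff1 ff2
    have key : ∀ (θ : Fml Cst Rl ar), (∀ u ∈ θ.bv, u < NN φ ψ) →
        (∀ u ∈ θ.fv, u < NN φ ψ) →
        (θ.msubst (σL φ ψ (a :: L))).subst (a + NN φ ψ) (.inl a)
          = θ.msubst (σL φ ψ L) := by
      intro θ hbv hfv
      rw [Fml.msubst_subst_bv (fun hb => by have := hbv _ hb; omega)]
      refine Fml.msubst_congr_fv ?_
      intro y hy
      have hylow := hfv y hy
      by_cases hya : y = a
      · subst hya
        have : y ∉ L := (List.nodup_cons.mp hnd).1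
        simp [σL, Fml.substT, this]
      · by_cases hyL : y ∈ L
        · have h1 : y ∈ a :: L := List.mem_cons_of_mem _ hyL
          simp only [σL, if_pos h1, if_pos hyL, Fml.substT]
          rw [if_neg (by omega)]
        · have h1 : y ∉ a :: L := by
            simp [List.mem_cons, hya, hyL]
          simp only [σL, if_neg h1, if_neg hyL, Fml.substT]
          rw [if_neg (by omega)]
    rw [key φ (fun u hu => bv_phi_low φ ψ hu) (fun u hu => fv_phi_low φ ψ hu),
      key ψ (fun u hu => bv_psi_low φ ψ hu) (fun u hu => fv_psi_low φ ψ hu)] at h2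
    exact ih (List.nodup_cons.mp hnd).2 (fun b hb => hlow b (List.mem_cons_of_mem _ hb)) h2

end

variable {Cst Rl : Type} {ar : Rl → ℕ}

noncomputable section
open Classical
open scoped Classical

variable (φ ψ : Fml Cst Rl ar)

theorem I_val {w : (theModel φ ψ).W} {c : Cst}
    (h : (Sum.inr c : ℕ ⊕ Cst) ∈ Dlist φ ψ) :
    (theModel φ ψ).I w c = ⟨Sum.inr c, h⟩ := by
  show @dite _ _ (Classical.dec _) _ _ = _
  exact dif_pos h

theorem rel_eq (w : (theModel φ ψ).W) (S : Rl) (ts : Fin (ar S) → ℕ ⊕ Cst)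
    (g : ℕ → {t : ℕ ⊕ Cst // t ∈ Dlist φ ψ})
    (hc : Fml.consts (Fml.rel (ar := ar) S ts) ⊆ CD φ ψ) :
    (Fml.rel S (fun i => ((theModel φ ψ).tval (w := w) g (ts i)).val) : Fml Cst Rl ar)
      = (Fml.rel S ts).msubst (fun y => (g y).val) := by
  simp only [Fml.msubst]
  congr 1
  funext i
  rcases hts : ts i with u | c
  · simp [Model.tval, hts]
  · have hmem : (Sum.inr c : ℕ ⊕ Cst) ∈ Dlist φ ψ := hc ⟨i, hts⟩
    simp only [Model.tval, hts]
    rw [I_val φ ψ hmem]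

theorem satA : ∀ (θ : Fml Cst Rl ar) (g : ℕ → {t : ℕ ⊕ Cst // t ∈ Dlist φ ψ})
    (χ : Fml Cst Rl ar) (hχ : χ ∈ nodeL φ ψ),
    θ.consts ⊆ CD φ ψ → (∀ u ∈ θ.bv, u < NN φ ψ) →
    Part (Dlist φ ψ) (θ.msubst (fun y => (g y).val)) χ →
    (theModel φ ψ).Sat ⟨χ, hχ⟩ g θ := by
  intro θ
  induction θ with
  | top => intros; simp [Model.Sat]
  | rel S ts =>
    intro g χ hχ hc hbv hp
    have hder : Der χ ((Fml.rel S ts).msubst fun y => (g y).val) :=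
      part_der hp (node_bv_cond φ ψ hχ)
    rw [← rel_eq φ ψ ⟨χ, hχ⟩ S ts g hc] at hder
    exact hder
  | and θ₁ θ₂ ih1 ih2 =>
    intro g χ hχ hc hbv hp
    simp only [Model.Sat]
    constructor
    · exact ih1 g χ hχ (fun c h => hc (Or.inl h)) (fun u h => hbv u (Or.inl h)) (part_andl hp)
    · exact ih2 g χ hχ (fun c h => hc (Or.inr h)) (fun u h => hbv u (Or.inr h)) (part_andr hp)
  | dia θ' ih =>
    intro g χ hχ hc hbv hp
    have hsd := part_dia hp
    have htc : θ'.msubst (fun y => (g y).val) ∈ tcSucc (Dlist φ ψ) χ :=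
      mem_tcSucc_iff.mpr ⟨_, hsd, Or.inl rfl⟩
    have hmem := node_closed φ ψ hχ htc
    exact ⟨⟨_, hmem⟩, htc, ih g _ hmem hc hbv (Part.refl _)⟩
  | all x θ' ih =>
    intro g χ hχ hc hbv hp
    simp only [Model.Sat]
    intro h hh
    have hxbv : x < NN φ ψ := hbv x (Or.inl rfl)
    have hEq : h = Function.update g x (h x) := by
      funext y
      by_cases hy : y = x
      · subst hy; exact (Function.update_self y (h y) g).symm
      · exact (hh y hy).trans (Function.update_of_ne hy _ _).symm
    rw [hEq]
    refine ih (Function.update g x (h x)) χ hχ hc (fun u hu => hbv u (Or.inr hu)) ?_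
    simp only [Fml.msubst] at hp
    have hp2 := part_alli hp (h x).2
    have hcond : ∀ y, y ≠ x →
        (Function.update (fun y => (g y).val) x (Sum.inl x : ℕ ⊕ Cst)) y ≠ .inl x := by
      intro y hy
      rw [Function.update_of_ne hy]
      intro hv
      exact inl_Dlist_not_low φ ψ (hv ▸ (g y).2) hxbv
    have hcomp : (θ'.msubst (Function.update (fun y => (g y).val) x (.inl x))).subst
          x (h x).val
        = θ'.msubst (fun y => ((Function.update g x (h x)) y).val) := by
      rw [Fml.msubst_subst_cond hcond]
      refine Fml.msubst_congr_fv ?_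
      intro y _
      by_cases hy : y = x
      · subst hy; simp [Fml.substT]; exact congrArg Subtype.val (Function.update_self y (h y) g).symm
      · rw [Function.update_of_ne hy,
          show Function.update g x (h x) y = g y from Function.update_of_ne hy _ _]
        rcases hv : ((g y).val : ℕ ⊕ Cst) with u | c
        · have hux : u ≠ x := by
            intro h'
            subst h'
            exact inl_Dlist_not_low φ ψ (hv ▸ (g y).2) hxbv
          simp [Fml.substT, hux]
        · simp [Fml.substT]
    rw [hcomp] at hp2
    exact hp2

theorem satB : ∀ (θ : Fml Cst Rl ar) (g : ℕ → {t : ℕ ⊕ Cst // t ∈ Dlist φ ψ})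
    (χ : Fml Cst Rl ar) (hχ : χ ∈ nodeL φ ψ),
    θ.consts ⊆ CD φ ψ → (∀ u ∈ θ.bv, u < NN φ ψ) → θ.fvb ≤ ψ.fvb →
    (theModel φ ψ).Sat ⟨χ, hχ⟩ g θ →
    Der χ (θ.msubst (fun y => (g y).val)) := by
  intro θ
  induction θ with
  | top => intros; exact Der.top _
  | rel S ts =>
    intro g χ hχ hc hbv hf hs
    have hder : Der χ (Fml.rel S (fun i => ((theModel φ ψ).tval (w := ⟨χ, hχ⟩) g
        (ts i)).val)) := hs
    rwa [rel_eq φ ψ ⟨χ, hχ⟩ S ts g hc] at hder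
  | and θ₁ θ₂ ih1 ih2 =>
    intro g χ hχ hc hbv hf hs
    obtain ⟨hs1, hs2⟩ := hs
    exact Der.andI
      (ih1 g χ hχ (fun c h => hc (Or.inl h)) (fun u h => hbv u (Or.inl h))
        (le_trans (Nat.le_add_right _ _) hf) hs1)
      (ih2 g χ hχ (fun c h => hc (Or.inr h)) (fun u h => hbv u (Or.inr h))
        (le_trans (Nat.le_add_left _ _) hf) hs2)
  | dia θ' ih =>
    intro g χ hχ hc hbv hf hs
    obtain ⟨v, hR, hsv⟩ := hs
    have hder : Der v.val (θ'.msubst (fun y => (g y).val)) :=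
      ih (fun n => (theModel φ ψ).η ⟨χ, hχ⟩ v hR (g n)) v.val v.2 hc hbv hf hsv
    have hchain : Der χ (.dia v.val) := mem_tcSucc_der (node_bv_cond φ ψ hχ) hR
    exact Der.cut hchain (Der.diaMono hder)
  | all x θ' ih =>
    intro g χ hχ hc hbv hf hs
    have hxbv : x < NN φ ψ := hbv x (Or.inl rfl)
    set σ0 : ℕ → ℕ ⊕ Cst := fun y => (g y).val with hσ0
    set A : Fml Cst Rl ar := θ'.msubst (Function.update σ0 x (.inl x)) with hA
    -- choose a fresh pool variable
    have hEfin : (χ.fv ∪ A.fv).Finite := (Fml.fv_finite χ).union (Fml.fv_finite A)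
    have hcard : (χ.fv ∪ A.fv).ncard < NN φ ψ + KK φ ψ := by
      have h1 : χ.fv.ncard ≤ φ.fvb :=
        le_trans (Fml.ncard_fv_le_fvb χ) (nodeInv φ ψ hχ).2.2
      have h2 : A.fv.ncard ≤ θ'.fvb := by
        rw [hA]
        exact le_trans (Fml.ncard_fv_le_fvb _) (le_of_eq (Fml.fvb_msubst _ _))
      have h3 : θ'.fvb + 1 ≤ ψ.fvb := hf
      have h4 := Set.ncard_union_le χ.fv A.fv
      have hNN : 1 ≤ NN φ ψ := by simp [NN]
      have hKK : KK φ ψ = φ.fvb + ψ.fvb + 1 := rfl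
      omega
    obtain ⟨v, hvD, hvE⟩ := fresh_var φ ψ _ hEfin hcard
    have hvχ : v ∉ χ.fv := fun h => hvE (Or.inl h)
    have hvA : v ∉ A.fv := fun h => hvE (Or.inr h)
    have hvlow : ¬ v < NN φ ψ := inl_Dlist_not_low φ ψ hvD
    have hvbA : v ∉ A.bv := by
      rw [hA, Fml.bv_msubst]
      intro hb
      exact hvlow (hbv v (Or.inr hb))
    have hvx : v ≠ x := fun h => hvlow (h ▸ hxbv)
    -- instance derivation at the fresh variable
    have hsv := hs (Function.update g x ⟨.inl v, hvD⟩)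
      (fun y hy => Function.update_of_ne hy _ _)
    have hder1 : Der χ (θ'.msubst (fun y => ((Function.update g x ⟨.inl v, hvD⟩) y).val)) :=
      ih _ χ hχ hc (fun u hu => hbv u (Or.inr hu)) (by
        have hfall : (Fml.all x θ').fvb = θ'.fvb + 1 := rfl
        omega) hsv
    have hcond : ∀ y, y ≠ x → (Function.update σ0 x (Sum.inl x : ℕ ⊕ Cst)) y ≠ .inl x := by
      intro y hy
      rw [Function.update_of_ne hy]
      intro hv
      exact inl_Dlist_not_low φ ψ (hv ▸ (g y).2) hxbv
    have hcomp : A.subst x (.inl v)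
        = θ'.msubst (fun y => ((Function.update g x ⟨.inl v, hvD⟩) y).val) := by
      rw [hA, Fml.msubst_subst_cond hcond]
      refine Fml.msubst_congr_fv ?_
      intro y _
      by_cases hy : y = x
      · subst hy; simp [Fml.substT]
      · rw [Function.update_of_ne hy, Function.update_of_ne hy, hσ0]
        rcases hv : ((g y).val : ℕ ⊕ Cst) with u | c
        · have hux : u ≠ x := by
            intro h'
            subst h'
            exact inl_Dlist_not_low φ ψ (hv ▸ (g y).2) hxbv
          simp [Fml.substT, hv, hux]
        · simp [Fml.substT, hv]
    rw [← hcomp] at hder1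
    have hder2 : Der χ (.all v (A.subst x (.inl v))) := Der.allI v hder1 hvχ
    have hcanc : (A.subst x (.inl v)).subst v (.inl x) = A :=
      Fml.subst_subst_cancel hvA hvbA hvx
    have hrefl : Der ((A.subst x (.inl v)).subst v (.inl x)) A := by
      rw [hcanc]; exact Der.refl A
    have hallE : Der (.all v (A.subst x (.inl v))) A :=
      Der.allE v (.inl x) hrefl (Fml.freeFor_cancel hvA hvbA)
    have hxnot : x ∉ Fml.fv (.all v (A.subst x (.inl v))) := by
      rintro ⟨hx1, _⟩
      rcases Fml.fv_subst_subset A x (.inl v) hx1 with ⟨_, hx3⟩ | hx4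
      · exact hx3 rfl
      · exact hvx ((by simpa using hx4 : x = v)).symm
    have hbridge : Der (.all v (A.subst x (.inl v))) (.all x A) := Der.allI x hallE hxnot
    exact Der.cut hder2 hbridge

/-- Assembled completeness statement. -/
theorem completeness_aux (h : ¬ Der φ ψ) :
    ∃ M : Model Cst Rl ar, M.Adequate ∧ Finite M.W ∧ Irreflexive M.R ∧
      M.ConstantDomain ∧
      ∃ (w : M.W) (g : ℕ → M.Dom w), M.Sat w g φ ∧ ¬ M.Sat w g ψ := by
  refine ⟨theModel φ ψ, ⟨fun a b c h1 h2 => tcSucc_trans h1 h2,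
    fun h1 h2 h3 => rfl, fun h c => rfl⟩,
    (List.finite_toSet _).to_subtype,
    fun w hw => absurd (mem_tcSucc_mdepth hw) (lt_irrefl _),
    fun w v => rfl,
    ⟨root φ ψ, List.mem_cons_self⟩, gZero φ ψ, ?_, ?_⟩
  · -- Sat of φ at the root
    have hroot : φ.msubst (fun y => (gZero φ ψ y).val) = root φ ψ := by
      refine Fml.msubst_congr_fv ?_
      intro y hy
      have : y < NN φ ψ := fv_phi_low φ ψ hy
      rw [gZero_val φ ψ (by omega)]
      rfl
    refine satA φ ψ φ (gZero φ ψ) (root φ ψ) (List.mem_cons_self)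
      (consts_phi_CD φ ψ) (fun u hu => bv_phi_low φ ψ hu) ?_
    rw [hroot]
    exact Part.refl _
  · -- ψ fails at the root
    intro hs
    have hder : Der (root φ ψ) (ψ.msubst (fun y => (gZero φ ψ y).val)) :=
      satB φ ψ ψ (gZero φ ψ) (root φ ψ) (List.mem_cons_self)
        (consts_psi_CD φ ψ) (fun u hu => bv_psi_low φ ψ hu) le_rfl hs
    have hψr : ψ.msubst (fun y => (gZero φ ψ y).val) = ψ.msubst (σr φ ψ) := by
      refine Fml.msubst_congr_fv ?_
      intro y hy
      have : y < NN φ ψ := fv_psi_low φ ψ hy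
      rw [gZero_val φ ψ (by omega)]
      rfl
    rw [hψr] at hder
    -- transfer to the σL form and recover
    set L : List ℕ := ((Fml.fv_finite φ).union (Fml.fv_finite ψ)).toFinset.toList with hL
    have hmemL : ∀ y, y ∈ L ↔ y ∈ φ.fv ∪ ψ.fv := by
      intro y
      rw [hL, Finset.mem_toList, Set.Finite.mem_toFinset]
    have hφeq : φ.msubst (σr φ ψ) = φ.msubst (σL φ ψ L) := by
      refine Fml.msubst_congr_fv ?_
      intro y hy
      have : y ∈ L := (hmemL y).mpr (Or.inl hy)
      simp [σr, σL, this]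
    have hψeq : ψ.msubst (σr φ ψ) = ψ.msubst (σL φ ψ L) := by
      refine Fml.msubst_congr_fv ?_
      intro y hy
      have : y ∈ L := (hmemL y).mpr (Or.inr hy)
      simp [σr, σL, this]
    rw [root, hφeq, hψeq] at hder
    refine h (recover φ ψ L (Finset.nodup_toList _) ?_ hder)
    intro a ha
    rcases (hmemL a).mp ha with h' | h'
    · exact fv_phi_low φ ψ h'
    · exact fv_psi_low φ ψ h'

end

theorem constant_domain_completeness (Cst Rl : Type) (ar : Rl → ℕ)
    (φ ψ : Fml Cst Rl ar) (h : ¬ Der φ ψ) :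
    ∃ M : Model Cst Rl ar, M.Adequate ∧ Finite M.W ∧ Irreflexive M.R ∧
      M.ConstantDomain ∧
      ∃ (w : M.W) (g : ℕ → M.Dom w), M.Sat w g φ ∧ ¬ M.Sat w g ψ :=
  completeness_aux φ ψ h


end QRC1
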